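/- For every finite-dimensional Hilbert space E, the matrix convex hull of the collection of commuting k-tuples of positive invertible operators equals the set of all (not necessarily commuting) k-tuples of positive invertible operators: co^mat(CP^k)(E) = P^k(E). -/

import Mathlib

open Matrix
open scoped ComplexOrder

abbrev Mat (d : ℕ) := Matrix (Fin d) (Fin d) ℂ

private lemma stackConj {d n k : ℕ} (W : Fin k → Matrix (Fin d) (Fin n) ℂ)
    (Z : Fin k → Matrix (Fin d) (Fin d) ℂ) :
    (Matrix.of fun (p : Fin d × Fin k) b => W p.2 p.1 b)ᴴ * Matrix.blockDiagonal Z *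
      (Matrix.of fun (p : Fin d × Fin k) b => W p.2 p.1 b) = ∑ m, (W m)ᴴ * Z m * W m := by
  ext b c
  simp only [Matrix.mul_apply, Matrix.sum_apply, Matrix.conjTranspose_apply,
    Matrix.blockDiagonal_apply, Matrix.of_apply, Fintype.sum_prod_type,
    mul_ite, ite_mul, mul_zero, zero_mul, Finset.sum_ite_eq, Finset.sum_ite_eq',
    Finset.mem_univ, if_true]
  rw [Finset.sum_comm]

theorem stmt7 (k d : ℕ) (X : Fin k → Mat d) :
    (∀ i, (X i).PosDef) ↔
      ∃ (d' : ℕ) (x : Fin k → Mat d') (V : Matrix (Fin d') (Fin d) ℂ),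
        Vᴴ * V = 1 ∧ (∀ i, (x i).PosDef) ∧ (∀ i j, Commute (x i) (x j)) ∧
        ∀ i, X i = Vᴴ * x i * V := by
  constructor
  · intro hX
    rcases Nat.eq_zero_or_pos k with hk | hk
    · subst hk
      exact ⟨d, fun i => i.elim0, 1, by simp, fun i => i.elim0, fun i => i.elim0,
        fun i => i.elim0⟩
    -- setup
    have hk0 : (k : ℂ) ≠ 0 := by exact_mod_cast hk.ne'
    have hk1 : (1 : ℝ) ≤ (k : ℝ) := by exact_mod_cast hk
    set U : Fin k → Matrix (Fin d) (Fin d) ℂ :=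
      fun m => ((hX m).1.eigenvectorUnitary : Matrix (Fin d) (Fin d) ℂ) with hU
    set eig : Fin k → Fin d → ℝ := fun m => (hX m).1.eigenvalues with heigdef
    have hUU : ∀ m, U m * (U m)ᴴ = 1 := fun m =>
      Matrix.mem_unitaryGroup_iff.mp ((hX m).1.eigenvectorUnitary).2
    have hUU' : ∀ m, (U m)ᴴ * U m = 1 := fun m =>
      Matrix.mem_unitaryGroup_iff'.mp ((hX m).1.eigenvectorUnitary).2
    have heig : ∀ i a, 0 < eig i a := fun i a => (hX i).eigenvalues_pos a
    set ε : Fin k → ℝ := fun i => ⨅ a, eig i a with hεdef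
    have hε_le : ∀ i a, ε i ≤ eig i a := fun i a =>
      ciInf_le (Set.finite_range _).bddBelow a
    have hε_pos : ∀ (i : Fin k) (a0 : Fin d), 0 < ε i := by
      intro i a0
      haveI : Nonempty (Fin d) := ⟨a0⟩
      obtain ⟨a1, ha1⟩ := Finite.exists_min (eig i)
      exact lt_of_lt_of_le (heig i a1) (le_ciInf ha1)
    set g : Fin k → Fin k → Fin d → ℝ :=
      fun i m a => if m = i then k * eig i a - (k - 1) * ε i else ε i with hgdef
    have hg : ∀ i m a, 0 < g i m a := by
      intro i m a
      simp only [hgdef]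
      split
      · nlinarith [hε_le i a, heig i a, hε_pos i a]
      · exact hε_pos i a
    -- the isometry before reindexing
    set c : ℂ := (((Real.sqrt k)⁻¹ : ℝ) : ℂ) with hc
    have hcc : c * c = (k : ℂ)⁻¹ := by
      rw [hc, ← Complex.ofReal_mul, ← mul_inv, Real.mul_self_sqrt (by positivity),
        Complex.ofReal_inv, Complex.ofReal_natCast]
    set W : Fin k → Matrix (Fin d) (Fin d) ℂ := fun m => c • (U m)ᴴ with hW
    set V : Matrix (Fin d × Fin k) (Fin d) ℂ :=
      Matrix.of fun (p : Fin d × Fin k) b => W p.2 p.1 b with hV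
    have hWconj : ∀ (Z : Matrix (Fin d) (Fin d) ℂ) (m : Fin k),
        (W m)ᴴ * Z * W m = (k : ℂ)⁻¹ • (U m * Z * (U m)ᴴ) := by
      intro Z m
      simp only [hW, Matrix.conjTranspose_smul, Matrix.conjTranspose_conjTranspose]
      rw [Matrix.smul_mul, Matrix.smul_mul, Matrix.mul_smul, smul_smul,
        show star c = c by simp [hc], hcc]
    have hVV : Vᴴ * V = 1 := by
      have h := stackConj W (fun _ => (1 : Matrix (Fin d) (Fin d) ℂ))
      rw [show (fun _ : Fin k => (1 : Matrix (Fin d) (Fin d) ℂ)) = 1 from rfl,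
        Matrix.blockDiagonal_one] at h
      simp only [Matrix.mul_one] at h
      rw [hV, h]
      have : ∀ m : Fin k, (W m)ᴴ * W m
          = (k : ℂ)⁻¹ • (1 : Matrix (Fin d) (Fin d) ℂ) := by
        intro m
        have h2 := hWconj 1 m
        rwa [Matrix.mul_one, Matrix.mul_one, hUU m] at h2
      rw [Finset.sum_congr rfl fun m _ => this m, Finset.sum_const, Finset.card_univ,
        Fintype.card_fin, ← Nat.cast_smul_eq_nsmul ℂ, smul_smul, mul_inv_cancel₀ hk0, one_smul]
    have hspec : ∀ m, U m * Matrix.diagonal (RCLike.ofReal ∘ eig m) * (U m)ᴴ = X m := by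
      intro m
      rw [hU, heigdef, ← Matrix.star_eq_conjTranspose]
      exact ((hX m).1.spectral_theorem).symm
    -- conjugation identity
    have hconj : ∀ i, X i = Vᴴ * Matrix.blockDiagonal
        (fun m => Matrix.diagonal fun a => ((g i m a : ℝ) : ℂ)) * V := by
      intro i
      rw [hV, stackConj]
      have hterm : ∀ m : Fin k, (W m)ᴴ * Matrix.diagonal (fun a => ((g i m a : ℝ) : ℂ)) * W m
          = if m = i then
              (k : ℂ)⁻¹ • ((k : ℂ) • X i - (((k - 1) * ε i : ℝ) : ℂ) • 1)
            else ((k : ℂ)⁻¹ * ((ε i : ℝ) : ℂ)) • 1 := by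
        intro m
        rw [hWconj]
        by_cases hm : m = i
        · rw [if_pos hm]
          subst hm
          congr 1
          have hdiag : Matrix.diagonal (fun a => ((g m m a : ℝ) : ℂ))
              = (k : ℂ) • Matrix.diagonal (RCLike.ofReal ∘ eig m)
                - (((k - 1) * ε m : ℝ) : ℂ) • 1 := by
            ext p q
            by_cases hpq : p = q <;>
              simp [hgdef, Matrix.diagonal_apply, Matrix.one_apply, hpq] <;> push_cast <;> ring
          rw [hdiag, Matrix.mul_sub, Matrix.sub_mul, Matrix.mul_smul, Matrix.smul_mul,
            Matrix.mul_smul, Matrix.smul_mul, mul_one, hUU, hspec m]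
        · rw [if_neg hm]
          have hdiag : Matrix.diagonal (fun a => ((g i m a : ℝ) : ℂ))
              = (((ε i : ℝ)) : ℂ) • 1 := by
            ext p q
            by_cases hpq : p = q <;>
              simp [hgdef, hm, Matrix.diagonal_apply, Matrix.one_apply, hpq]
          rw [hdiag, Matrix.mul_smul, Matrix.smul_mul, mul_one, hUU, smul_smul]
      rw [Finset.sum_congr rfl fun m _ => hterm m]
      rw [← Finset.add_sum_erase _ _ (Finset.mem_univ i), if_pos rfl]
      rw [Finset.sum_congr rfl (fun m hm => if_neg (Finset.ne_of_mem_erase hm)),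
        Finset.sum_const, Finset.card_erase_of_mem (Finset.mem_univ i), Finset.card_univ,
        Fintype.card_fin, ← Nat.cast_smul_eq_nsmul ℂ]
      have hcast : ((k - 1 : ℕ) : ℂ) = (k : ℂ) - 1 := by
        push_cast [Nat.cast_sub hk]; ring
      rw [hcast]
      match_scalars <;> push_cast <;> field_simp <;> ring
    -- reindex to Fin (d * k)
    set e : Fin d × Fin k ≃ Fin (d * k) := finProdFinEquiv with he
    refine ⟨d * k,
      fun i => Matrix.diagonal fun p => ((g i (e.symm p).2 (e.symm p).1 : ℝ) : ℂ),
      V.submatrix e.symm id, ?_, ?_, ?_, ?_⟩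
    · rw [Matrix.conjTranspose_submatrix, Matrix.submatrix_mul_equiv, hVV,
        Matrix.submatrix_id_id]
    · intro i
      rw [Matrix.posDef_diagonal_iff]
      intro p
      exact_mod_cast hg i _ _
    · intro i j
      show _ * _ = _ * _
      rw [Matrix.diagonal_mul_diagonal, Matrix.diagonal_mul_diagonal]
      exact congrArg _ (funext fun p => mul_comm _ _)
    · intro i
      have hxd : Matrix.diagonal (fun p => ((g i (e.symm p).2 (e.symm p).1 : ℝ) : ℂ))
          = (Matrix.blockDiagonal
              (fun m => Matrix.diagonal fun a => ((g i m a : ℝ) : ℂ))).submatrix e.symm e.symm := by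
        rw [Matrix.blockDiagonal_diagonal]
        ext p q
        simp [Matrix.diagonal_apply, e.symm.injective.eq_iff]
      beta_reduce
      rw [hxd, Matrix.conjTranspose_submatrix, Matrix.submatrix_mul_equiv,
        Matrix.submatrix_mul_equiv, Matrix.submatrix_id_id]
      exact hconj i
  · rintro ⟨d', x, V, hV, hx, -, hXeq⟩ i
    rw [hXeq i]
    refine Matrix.PosDef.of_dotProduct_mulVec_pos ?_ (fun v hv => ?_)
    · have h1 := (hx i).1
      rw [Matrix.IsHermitian, Matrix.conjTranspose_mul, Matrix.conjTranspose_mul,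
        Matrix.conjTranspose_conjTranspose, h1.eq, Matrix.mul_assoc]
    · have hVv : V *ᵥ v ≠ 0 := by
        intro h0
        apply hv
        have : Vᴴ *ᵥ (V *ᵥ v) = v := by
          rw [Matrix.mulVec_mulVec, hV, Matrix.one_mulVec]
        rw [h0, Matrix.mulVec_zero] at this
        exact this.symm
      have := (hx i).dotProduct_mulVec_pos hVv
      rw [Matrix.mul_assoc, ← Matrix.mulVec_mulVec, ← Matrix.mulVec_mulVec,
        Matrix.dotProduct_mulVec, ← Matrix.star_mulVec]
      exact this
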